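/- Let k > 1 be real, a_0 = k, let a_j (j ≥ 1) be the Sylvester sequence of 1 − 1/k and b_ℓ the Sylvester sequence of 1, and set A_j = 20k³a_j² (with A_0 = 20k³) and B_ℓ = 20k³b_ℓ². Then ∑_{j=0}^∞ ∑_{ℓ=1}^∞ (k²/(a_j b_ℓ))(log(A_j + B_ℓ) + 1) ≤ k²(6 + log(20k³)) ≤ 10k³. -/

import Mathlib

/-- The Sylvester sequence of `α`: `sylv α n` is the `(n+1)`-st term `s_{n+1}(α)`,
the least integer strictly greater than the reciprocal of the remainder
`α - 1/s_1 - ⋯ - 1/s_n`. -/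
noncomputable def sylv (α : ℝ) : ℕ → ℤ
  | 0 => ⌊1/α⌋ + 1
  | n + 1 => ⌊(α - ∑ j ∈ (Finset.range (n+1)).attach, (1:ℝ)/(sylv α j.1))⁻¹⌋ + 1
decreasing_by exact Finset.mem_range.mp j.2

/-- The sequence `a_j` for `j ≥ 0`, with `a_0 = k` and `a_j` (for `j ≥ 1`) the Sylvester
sequence of `1 - 1/k`. -/
noncomputable def aSeq (k : ℝ) : ℕ → ℝ
  | 0 => k
  | j + 1 => (sylv (1 - 1/k) j : ℝ)


open Real Finset

noncomputable def Rem (α : ℝ) (n : ℕ) : ℝ := α - ∑ j ∈ Finset.range n, 1/((sylv α j : ℝ))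

lemma rem_zero (α : ℝ) : Rem α 0 = α := by simp [Rem]

lemma rem_succ (α : ℝ) (n : ℕ) : Rem α (n+1) = Rem α n - 1/((sylv α n : ℝ)) := by
  simp only [Rem, Finset.sum_range_succ]; ring

lemma sylv_eq (α : ℝ) (n : ℕ) : sylv α n = ⌊(Rem α n)⁻¹⌋ + 1 := by
  cases n with
  | zero => simp [sylv, Rem, one_div]
  | succ n =>
    rw [sylv]
    congr 2
    rw [Rem, Finset.sum_attach (Finset.range (n+1)) (fun j => (1:ℝ)/(sylv α j))]

lemma rem_pos_le {α : ℝ} (hα0 : 0 < α) (hα1 : α ≤ 1) : ∀ n, 0 < Rem α n ∧ Rem α n ≤ 1 := by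
  intro n
  induction n with
  | zero => rw [rem_zero]; exact ⟨hα0, hα1⟩
  | succ n ih =>
    obtain ⟨h0, h1⟩ := ih
    have hx : 1 ≤ (Rem α n)⁻¹ := by
      nlinarith [inv_pos.mpr h0, mul_inv_cancel₀ (ne_of_gt h0)]
    have hs : ((Rem α n)⁻¹ : ℝ) < ((sylv α n : ℝ)) := by
      rw [sylv_eq]; push_cast; linarith [Int.lt_floor_add_one (Rem α n)⁻¹]
    have hspos : (0:ℝ) < (sylv α n : ℝ) := by linarith
    have hinv : 1/((sylv α n : ℝ)) < Rem α n := by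
      rw [div_lt_iff₀ hspos]
      nlinarith [mul_inv_cancel₀ (ne_of_gt h0)]
    constructor
    · rw [rem_succ]; linarith
    · rw [rem_succ]
      have : 0 < 1/((sylv α n : ℝ)) := by positivity
      linarith

lemma sylv_ge_two {α : ℝ} (hα0 : 0 < α) (hα1 : α ≤ 1) (n : ℕ) : 2 ≤ sylv α n := by
  obtain ⟨h0, h1⟩ := rem_pos_le hα0 hα1 n
  have hx : (1:ℝ) ≤ (Rem α n)⁻¹ := by
    nlinarith [inv_pos.mpr h0, mul_inv_cancel₀ (ne_of_gt h0)]
  rw [sylv_eq]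
  have : (1:ℤ) ≤ ⌊(Rem α n)⁻¹⌋ := Int.le_floor.mpr (by exact_mod_cast hx)
  omega

lemma sylv_real_ge_two {α : ℝ} (hα0 : 0 < α) (hα1 : α ≤ 1) (n : ℕ) : (2:ℝ) ≤ (sylv α n : ℝ) := by
  exact_mod_cast sylv_ge_two hα0 hα1 n

lemma one_div_sylv_lt_rem {α : ℝ} (hα0 : 0 < α) (hα1 : α ≤ 1) (n : ℕ) :
    1/((sylv α n : ℝ)) < Rem α n := by
  obtain ⟨h0, h1⟩ := rem_pos_le hα0 hα1 n
  have hs : ((Rem α n)⁻¹ : ℝ) < ((sylv α n : ℝ)) := by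
    rw [sylv_eq]; push_cast; linarith [Int.lt_floor_add_one (Rem α n)⁻¹]
  have hspos : (0:ℝ) < (sylv α n : ℝ) := by
    have : (2:ℝ) ≤ (sylv α n : ℝ) := sylv_real_ge_two hα0 hα1 n
    linarith
  rw [div_lt_iff₀ hspos]
  nlinarith [mul_inv_cancel₀ (ne_of_gt h0)]

lemma rem_le_inv {α : ℝ} (hα0 : 0 < α) (hα1 : α ≤ 1) (n : ℕ) :
    Rem α n ≤ 1/((sylv α n : ℝ) - 1) := by
  obtain ⟨h0, h1⟩ := rem_pos_le hα0 hα1 n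
  have hs2 : (2:ℝ) ≤ (sylv α n : ℝ) := sylv_real_ge_two hα0 hα1 n
  have hfl : ((sylv α n : ℝ)) - 1 ≤ (Rem α n)⁻¹ := by
    rw [sylv_eq]; push_cast
    linarith [Int.floor_le (Rem α n)⁻¹]
  have h1s : (0:ℝ) < (sylv α n : ℝ) - 1 := by linarith
  rw [le_div_iff₀ h1s]
  nlinarith [mul_inv_cancel₀ (ne_of_gt h0)]

lemma sylv_growth {α : ℝ} (hα0 : 0 < α) (hα1 : α ≤ 1) (n : ℕ) :
    sylv α n * (sylv α n - 1) + 1 ≤ sylv α (n+1) := by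
  have hs2 : (2:ℝ) ≤ (sylv α n : ℝ) := sylv_real_ge_two hα0 hα1 n
  set s : ℝ := (sylv α n : ℝ) with hsdef
  have h0' : 0 < Rem α (n+1) := (rem_pos_le hα0 hα1 (n+1)).1
  have hle := rem_le_inv hα0 hα1 n
  have hlt := one_div_sylv_lt_rem hα0 hα1 n
  have h1 : Rem α (n+1) ≤ 1/(s*(s-1)) := by
    rw [rem_succ]
    have hs0 : s ≠ 0 := by linarith
    have hs1 : s - 1 ≠ 0 := by linarith
    have heq : 1/(s-1) - 1/s = 1/(s*(s-1)) := by
      field_simp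
      ring
    rw [← heq]
    linarith
  have hM : (0:ℝ) < s*(s-1) := by nlinarith
  have h2 : (s*(s-1) : ℝ) ≤ (Rem α (n+1))⁻¹ := by
    have e1 : s*(s-1) * (1/(s*(s-1))) = 1 := by rw [mul_one_div_cancel hM.ne']
    nlinarith [mul_inv_cancel₀ (ne_of_gt h0'), inv_pos.mpr h0']
  rw [sylv_eq α (n+1)]
  have h3 : ((sylv α n * (sylv α n - 1) : ℤ) : ℝ) ≤ (Rem α (n+1))⁻¹ := by push_cast; exact h2
  have h4 := Int.le_floor.mpr h3
  omega

lemma sum_sylv_le {α : ℝ} (hα0 : 0 < α) (hα1 : α ≤ 1) (n : ℕ) :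
    ∑ j ∈ Finset.range n, 1/((sylv α j : ℝ)) ≤ α := by
  have h := (rem_pos_le hα0 hα1 n).1
  rw [Rem] at h
  linarith

noncomputable def gg (x : ℝ) : ℝ := Real.log (1 + x^2) / x

lemma gg_nonneg {x : ℝ} (hx : 1 ≤ x) : 0 ≤ gg x :=
  div_nonneg (Real.log_nonneg (by nlinarith)) (by linarith)

lemma log5_gt : (8:ℝ)/5 < Real.log 5 := by
  rw [Real.lt_log_iff_exp_lt (by norm_num)]
  have h1 : Real.exp (8/5) ^ 5 = Real.exp 8 := by
    rw [← Real.exp_nat_mul]; norm_num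
  have h3 : Real.exp 8 = Real.exp 1 ^ 8 := by rw [← Real.exp_nat_mul]; norm_num
  have h2 : Real.exp 8 < 3125 := by
    rw [h3]
    calc Real.exp 1 ^ 8 ≤ 2.7182818286 ^ 8 := by
          apply pow_le_pow_left₀ (le_of_lt (Real.exp_pos 1)) (le_of_lt Real.exp_one_lt_d9)
      _ < 3125 := by norm_num
  have : Real.exp (8/5) ^ 5 < 5 ^ 5 := by rw [h1]; norm_num; linarith
  exact lt_of_pow_lt_pow_left₀ 5 (by norm_num) this

lemma log_ge_two_sub {y : ℝ} (hy : 5 ≤ y) : 2 - 2/y ≤ Real.log y := by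
  have h0 : (0:ℝ) < y := by linarith
  have h1 : Real.log (5/y) ≤ 5/y - 1 := Real.log_le_sub_one_of_pos (by positivity)
  have h2 : Real.log (5/y) = Real.log 5 - Real.log y := Real.log_div (by norm_num) (ne_of_gt h0)
  have h3 := log5_gt
  have h4 : 3/y ≤ 3/5 := by
    rw [div_le_div_iff₀ h0 (by norm_num)]; linarith
  have h5 : 5/y - 2/y = 3/y := by ring
  linarith

lemma gg_hasDeriv {x : ℝ} (hx : x ≠ 0) :
    HasDerivAt gg ((2*x/(1+x^2)*x - Real.log (1+x^2)) / x^2) x := by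
  have h1 : HasDerivAt (fun x : ℝ => 1 + x^2) (2*x) x := by
    simpa using (hasDerivAt_pow 2 x).const_add 1
  have hne : (1 + x^2) ≠ 0 := by positivity
  have h2 : HasDerivAt (fun x : ℝ => Real.log (1 + x^2)) (2*x/(1+x^2)) x := h1.log hne
  have h3 := h2.div (hasDerivAt_id x) hx
  simp only [mul_one, id] at h3
  have hgg : gg = (fun x : ℝ => Real.log (1 + x^2)) / id := by funext y; rfl
  rw [hgg]; exact h3

lemma gg_anti : AntitoneOn gg (Set.Ici 2) := by
  apply antitoneOn_of_deriv_nonpos (convex_Ici 2)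
  · intro x hx
    have hx0 : x ≠ 0 := by simp only [Set.mem_Ici] at hx; intro h; rw [h] at hx; norm_num at hx
    exact ((gg_hasDeriv hx0).continuousAt).continuousWithinAt
  · intro x hx
    rw [interior_Ici] at hx
    have hx0 : x ≠ 0 := by simp only [Set.mem_Ioi] at hx; intro h; rw [h] at hx; norm_num at hx
    exact (gg_hasDeriv hx0).differentiableAt.differentiableWithinAt
  · intro x hx
    rw [interior_Ici] at hx
    have hx2 : (2:ℝ) < x := hx
    have hx0 : x ≠ 0 := by linarith
    rw [(gg_hasDeriv hx0).deriv]
    apply div_nonpos_of_nonpos_of_nonneg _ (by positivity)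
    have hy : (5:ℝ) ≤ 1 + x^2 := by nlinarith
    have hlog := log_ge_two_sub hy
    have hxx : 2*x/(1+x^2)*x = 2 - 2/(1+x^2) := by
      field_simp
      ring
    rw [hxx]
    linarith

lemma gg_le_tail {x : ℝ} (hx : 2 ≤ x) : gg x ≤ 3 * Real.log x / x := by
  have h0 : (0:ℝ) < x := by linarith
  have h1 : (1 + x^2) ≤ x^3 := by nlinarith
  have h2 : Real.log (1+x^2) ≤ Real.log (x^3) := Real.log_le_log (by positivity) h1
  rw [Real.log_pow] at h2
  unfold gg
  have h3 : (0:ℝ) ≤ 3 * Real.log x := by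
    have := Real.log_nonneg (by linarith : (1:ℝ) ≤ x)
    positivity
  apply div_le_div₀ h3 (by push_cast at h2 ⊢; linarith) h0 le_rfl

lemma log_nat_le (n p q : ℕ) (hq : 0 < q) (h : n ^ q ≤ 2 ^ p) {D : ℝ}
    (hD : (p:ℝ) * 0.6931471808 / q ≤ D) (hn : 1 ≤ n) : Real.log (n:ℝ) ≤ D := by
  have h1 : ((n:ℝ)) ^ q ≤ (2:ℝ) ^ p := by exact_mod_cast h
  have hn1 : (1:ℝ) ≤ (n:ℝ) := by exact_mod_cast hn
  have h2 : Real.log ((n:ℝ)^q) ≤ Real.log ((2:ℝ)^p) := Real.log_le_log (by positivity) h1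
  rw [Real.log_pow, Real.log_pow] at h2
  have h3 : Real.log 2 ≤ 0.6931471808 := le_of_lt Real.log_two_lt_d9
  have h4 : (q:ℝ) * Real.log n ≤ (p:ℝ) * 0.6931471808 := by
    calc (q:ℝ) * Real.log n ≤ (p:ℝ) * Real.log 2 := h2
      _ ≤ (p:ℝ) * 0.6931471808 := by
          apply mul_le_mul_of_nonneg_left h3 (by positivity)
  have hq' : (0:ℝ) < q := by exact_mod_cast hq
  calc Real.log n = ((q:ℝ) * Real.log n)/q := by field_simp
    _ ≤ ((p:ℝ) * 0.6931471808)/q := by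
          apply div_le_div₀ (by positivity) h4 hq' le_rfl
    _ ≤ D := hD

lemma logle_5 : Real.log (5:ℝ) ≤ 1.60990 := by
  have := log_nat_le 5 72 31 (by norm_num) (by norm_num) (D := 1.60990) (by norm_num) (by norm_num)
  simpa using this

lemma logle_10 : Real.log (10:ℝ) ≤ 2.30304 := by
  have := log_nat_le 10 103 31 (by norm_num) (by norm_num) (D := 2.30304) (by norm_num) (by norm_num)
  simpa using this

lemma logle_17 : Real.log (17:ℝ) ≤ 2.83561 := by
  have := log_nat_le 17 45 11 (by norm_num) (by norm_num) (D := 2.83561) (by norm_num) (by norm_num)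
  simpa using this

lemma logle_26 : Real.log (26:ℝ) ≤ 3.26187 := by
  have := log_nat_le 26 80 17 (by norm_num) (by norm_num) (D := 3.26187) (by norm_num) (by norm_num)
  simpa using this

lemma logle_37 : Real.log (37:ℝ) ≤ 3.61977 := by
  have := log_nat_le 37 47 9 (by norm_num) (by norm_num) (D := 3.61977) (by norm_num) (by norm_num)
  simpa using this

lemma logle_50 : Real.log (50:ℝ) ≤ 3.91425 := by
  have := log_nat_le 50 96 17 (by norm_num) (by norm_num) (D := 3.91425) (by norm_num) (by norm_num)
  simpa using this

lemma logle_65 : Real.log (65:ℝ) ≤ 4.18902 := by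
  have := log_nat_le 65 139 23 (by norm_num) (by norm_num) (D := 4.18902) (by norm_num) (by norm_num)
  simpa using this

lemma logle_82 : Real.log (82:ℝ) ≤ 4.41882 := by
  have := log_nat_le 82 51 8 (by norm_num) (by norm_num) (D := 4.41882) (by norm_num) (by norm_num)
  simpa using this

lemma logle_145 : Real.log (145:ℝ) ≤ 4.99066 := by
  have := log_nat_le 145 36 5 (by norm_num) (by norm_num) (D := 4.99066) (by norm_num) (by norm_num)
  simpa using this

lemma logle_170 : Real.log (170:ℝ) ≤ 5.14910 := by
  have := log_nat_le 170 52 7 (by norm_num) (by norm_num) (D := 5.14910) (by norm_num) (by norm_num)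
  simpa using this

lemma logle_442 : Real.log (442:ℝ) ≤ 6.09970 := by
  have := log_nat_le 442 44 5 (by norm_num) (by norm_num) (D := 6.09970) (by norm_num) (by norm_num)
  simpa using this

lemma logle_577 : Real.log (577:ℝ) ≤ 6.37696 := by
  have := log_nat_le 577 46 5 (by norm_num) (by norm_num) (D := 6.37696) (by norm_num) (by norm_num)
  simpa using this

lemma logle_626 : Real.log (626:ℝ) ≤ 6.46938 := by
  have := log_nat_le 626 28 3 (by norm_num) (by norm_num) (D := 6.46938) (by norm_num) (by norm_num)
  simpa using this

lemma logle_1765 : Real.log (1765:ℝ) ≤ 7.48599 := by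
  have := log_nat_le 1765 54 5 (by norm_num) (by norm_num) (D := 7.48599) (by norm_num) (by norm_num)
  simpa using this

lemma logle_1807 : Real.log (1807:ℝ) ≤ 7.62462 := by
  have := log_nat_le 1807 11 1 (by norm_num) (by norm_num) (D := 7.62462) (by norm_num) (by norm_num)
  simpa using this

lemma logle_1850 : Real.log (1850:ℝ) ≤ 7.52560 := by
  have := log_nat_le 1850 76 7 (by norm_num) (by norm_num) (D := 7.52560) (by norm_num) (by norm_num)
  simpa using this

lemma logle_3193 : Real.log (3193:ℝ) ≤ 8.31777 := by
  have := log_nat_le 3193 12 1 (by norm_num) (by norm_num) (D := 8.31777) (by norm_num) (by norm_num)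
  simpa using this

lemma logle_3250 : Real.log (3250:ℝ) ≤ 8.08672 := by
  have := log_nat_le 3250 35 3 (by norm_num) (by norm_num) (D := 8.08672) (by norm_num) (by norm_num)
  simpa using this

lemma logle_5257 : Real.log (5257:ℝ) ≤ 8.66434 := by
  have := log_nat_le 5257 25 2 (by norm_num) (by norm_num) (D := 8.66434) (by norm_num) (by norm_num)
  simpa using this

lemma logle_5330 : Real.log (5330:ℝ) ≤ 8.66434 := by
  have := log_nat_le 5330 25 2 (by norm_num) (by norm_num) (D := 8.66434) (by norm_num) (by norm_num)
  simpa using this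

lemma logle_24493 : Real.log (24493:ℝ) ≤ 10.39721 := by
  have := log_nat_le 24493 15 1 (by norm_num) (by norm_num) (D := 10.39721) (by norm_num) (by norm_num)
  simpa using this

lemma logle_24650 : Real.log (24650:ℝ) ≤ 10.39721 := by
  have := log_nat_le 24650 15 1 (by norm_num) (by norm_num) (D := 10.39721) (by norm_num) (by norm_num)
  simpa using this

lemma logle_176821 : Real.log (176821:ℝ) ≤ 12.13008 := by
  have := log_nat_le 176821 35 2 (by norm_num) (by norm_num) (D := 12.13008) (by norm_num) (by norm_num)
  simpa using this

lemma logle_177242 : Real.log (177242:ℝ) ≤ 12.47665 := by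
  have := log_nat_le 177242 18 1 (by norm_num) (by norm_num) (D := 12.47665) (by norm_num) (by norm_num)
  simpa using this

lemma logle_360601 : Real.log (360601:ℝ) ≤ 12.82323 := by
  have := log_nat_le 360601 37 2 (by norm_num) (by norm_num) (D := 12.82323) (by norm_num) (by norm_num)
  simpa using this

lemma logle_361202 : Real.log (361202:ℝ) ≤ 13.16980 := by
  have := log_nat_le 361202 19 1 (by norm_num) (by norm_num) (D := 13.16980) (by norm_num) (by norm_num)
  simpa using this

def Tc (c : ℤ) : ℤ := c*(c-1)+1

def cseq (c0 : ℤ) : ℕ → ℤ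
  | 0 => c0
  | n+1 => Tc (cseq c0 n)

lemma cseq_ge_two {c0 : ℤ} (h : 2 ≤ c0) : ∀ n, 2 ≤ cseq c0 n := by
  intro n
  induction n with
  | zero => exact h
  | succ n ih => show 2 ≤ Tc (cseq c0 n); unfold Tc; nlinarith

lemma cseq_le {c0 : ℤ} (h2 : 2 ≤ c0) (s : ℕ → ℤ) (hs : ∀ n, 2 ≤ s n)
    (hrec : ∀ n, s n * (s n - 1) + 1 ≤ s (n+1)) (h0 : c0 ≤ s 0) : ∀ n, cseq c0 n ≤ s n := by
  intro n
  induction n with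
  | zero => exact h0
  | succ n ih =>
    have hc := cseq_ge_two h2 n
    have hsn := hs n
    have h3 : Tc (cseq c0 n) ≤ s n * (s n - 1) + 1 := by unfold Tc; nlinarith
    exact le_trans h3 (hrec n)

lemma cseq_add (c0 : ℤ) (N i : ℕ) : cseq c0 (N + i) = cseq (cseq c0 N) i := by
  induction i with
  | zero => rfl
  | succ i ih => show Tc (cseq c0 (N+i)) = Tc (cseq (cseq c0 N) i); rw [ih]

lemma tail_sum (c0 : ℤ) (h101 : 101 ≤ c0) (L : ℝ) (hL : Real.log (c0:ℝ) ≤ L) (hL0 : 0 ≤ L)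
    (m : ℕ) : ∑ n ∈ Finset.range m, gg ((cseq c0 n : ℝ)) ≤ 150/49 * L / (c0:ℝ) := by
  have hc0R : (101:ℝ) ≤ (c0:ℝ) := by exact_mod_cast h101
  have hc0pos : (0:ℝ) < (c0:ℝ) := by linarith
  have f2 : ∀ n, (100:ℝ)^n * (c0:ℝ) ≤ ((cseq c0 n : ℝ)) := by
    intro n
    induction n with
    | zero => show (100:ℝ)^0 * (c0:ℝ) ≤ ((c0:ℝ)); simp
    | succ n ih =>
      have h101n : (101:ℝ) ≤ ((cseq c0 n : ℝ)) := by
        calc (101:ℝ) ≤ (100:ℝ)^n * (c0:ℝ) := by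
              have : (1:ℝ) ≤ (100:ℝ)^n := one_le_pow₀ (by norm_num)
              nlinarith
          _ ≤ _ := ih
      have hT : ((cseq c0 (n+1) : ℝ)) = (cseq c0 n : ℝ) * ((cseq c0 n : ℝ) - 1) + 1 := by
        show ((Tc (cseq c0 n) : ℝ)) = _
        unfold Tc; push_cast; ring
      rw [hT, pow_succ]
      nlinarith [ih]
  have f1 : ∀ n, Real.log ((cseq c0 n : ℝ)) ≤ 2^n * L := by
    intro n
    induction n with
    | zero => simpa [cseq] using hL
    | succ n ih =>
      have h101n : (101:ℝ) ≤ ((cseq c0 n : ℝ)) := by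
        calc (101:ℝ) ≤ (100:ℝ)^n * (c0:ℝ) := by
              have : (1:ℝ) ≤ (100:ℝ)^n := one_le_pow₀ (by norm_num)
              nlinarith
          _ ≤ _ := f2 n
      have hT : ((cseq c0 (n+1) : ℝ)) = (cseq c0 n : ℝ) * ((cseq c0 n : ℝ) - 1) + 1 := by
        show ((Tc (cseq c0 n) : ℝ)) = _
        unfold Tc; push_cast; ring
      have hsq : ((cseq c0 (n+1) : ℝ)) ≤ ((cseq c0 n : ℝ))^2 := by rw [hT]; nlinarith
      have hpos : (0:ℝ) < ((cseq c0 (n+1) : ℝ)) := by rw [hT]; nlinarith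
      calc Real.log ((cseq c0 (n+1) : ℝ)) ≤ Real.log (((cseq c0 n : ℝ))^2) :=
            Real.log_le_log hpos hsq
        _ = 2 * Real.log ((cseq c0 n : ℝ)) := by
            rw [Real.log_pow]; norm_num
        _ ≤ 2 * (2^n * L) := by linarith
        _ = 2^(n+1) * L := by ring
  have term : ∀ n, gg ((cseq c0 n : ℝ)) ≤ (3*L/(c0:ℝ)) * (1/50)^n := by
    intro n
    have h101n : (101:ℝ) ≤ ((cseq c0 n : ℝ)) := by
      calc (101:ℝ) ≤ (100:ℝ)^n * (c0:ℝ) := by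
            have : (1:ℝ) ≤ (100:ℝ)^n := one_le_pow₀ (by norm_num)
            nlinarith
        _ ≤ _ := f2 n
    have h1 := gg_le_tail (by linarith : (2:ℝ) ≤ ((cseq c0 n : ℝ)))
    have h2 : 3 * Real.log ((cseq c0 n : ℝ)) / ((cseq c0 n : ℝ)) ≤ 3 * (2^n*L) / ((100:ℝ)^n * (c0:ℝ)) := by
      apply div_le_div₀ (by positivity) (by linarith [f1 n]) (by positivity) (f2 n)
    have h3 : 3 * ((2:ℝ)^n*L) / ((100:ℝ)^n * (c0:ℝ)) = (3*L/(c0:ℝ)) * (1/50)^n := by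
      have h100 : (100:ℝ)^n = 2^n * 50^n := by rw [← mul_pow]; norm_num
      have hne1 : ((2:ℝ))^n ≠ 0 := by positivity
      have hne2 : ((50:ℝ))^n ≠ 0 := by positivity
      have hne3 : ((c0:ℝ)) ≠ 0 := by positivity
      rw [h100]
      field_simp
      rw [mul_assoc, ← mul_pow, mul_one_div_cancel (by norm_num : (50:ℝ) ≠ 0), one_pow, mul_one]
    calc gg ((cseq c0 n : ℝ)) ≤ _ := h1
      _ ≤ _ := h2
      _ = _ := h3
  calc ∑ n ∈ Finset.range m, gg ((cseq c0 n : ℝ))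
      ≤ ∑ n ∈ Finset.range m, (3*L/(c0:ℝ)) * (1/50)^n := Finset.sum_le_sum (fun n _ => term n)
    _ = (3*L/(c0:ℝ)) * ∑ n ∈ Finset.range m, ((1:ℝ)/50)^n := by rw [Finset.mul_sum]
    _ ≤ (3*L/(c0:ℝ)) * (50/49) := by
        apply mul_le_mul_of_nonneg_left _ (by positivity)
        rw [geom_sum_eq (by norm_num)]
        have hp : (0:ℝ) ≤ ((1:ℝ)/50)^m := by positivity
        rw [div_le_iff_of_neg (by norm_num)]
        nlinarith
    _ = 150/49 * L / (c0:ℝ) := by ring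

lemma chain_bound (s : ℕ → ℤ) (hs : ∀ n, 2 ≤ s n)
    (hrec : ∀ n, s n * (s n - 1) + 1 ≤ s (n+1)) (c0 : ℤ) (hc2 : 2 ≤ c0) (h0 : c0 ≤ s 0)
    (N : ℕ) (L : ℝ) (h101 : 101 ≤ cseq c0 N) (hL : Real.log ((cseq c0 N : ℝ)) ≤ L) (hL0 : 0 ≤ L)
    (m : ℕ) :
    ∑ n ∈ Finset.range m, gg ((s n : ℝ)) ≤
      ∑ n ∈ Finset.range N, gg ((cseq c0 n : ℝ)) + 150/49 * L / ((cseq c0 N : ℝ)) := by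
  have hcpos : (0:ℝ) < ((cseq c0 N : ℝ)) := by
    have : (101:ℤ) ≤ cseq c0 N := h101
    have : (101:ℝ) ≤ ((cseq c0 N : ℝ)) := by exact_mod_cast this
    linarith
  have htail0 : 0 ≤ 150/49 * L / ((cseq c0 N : ℝ)) := by positivity
  have step1 : ∑ n ∈ Finset.range m, gg ((s n : ℝ)) ≤ ∑ n ∈ Finset.range m, gg ((cseq c0 n : ℝ)) := by
    apply Finset.sum_le_sum
    intro n _
    have hc2n : (2:ℝ) ≤ ((cseq c0 n : ℝ)) := by exact_mod_cast cseq_ge_two hc2 n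
    have hsc : ((cseq c0 n : ℝ)) ≤ ((s n : ℝ)) := by exact_mod_cast cseq_le hc2 s hs hrec h0 n
    exact gg_anti (Set.mem_Ici.mpr hc2n) (Set.mem_Ici.mpr (le_trans hc2n hsc)) hsc
  refine le_trans step1 ?_
  have ggnn : ∀ n : ℕ, 0 ≤ gg ((cseq c0 n : ℝ)) := by
    intro n
    have hc2n : (2:ℝ) ≤ ((cseq c0 n : ℝ)) := by exact_mod_cast cseq_ge_two hc2 n
    exact gg_nonneg (by linarith)
  rcases le_total m N with h | h
  · calc ∑ n ∈ Finset.range m, gg ((cseq c0 n : ℝ)) ≤ ∑ n ∈ Finset.range N, gg ((cseq c0 n : ℝ)) :=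
        Finset.sum_le_sum_of_subset_of_nonneg (Finset.range_subset_range.mpr h) (fun i _ _ => ggnn i)
      _ ≤ _ := le_add_of_nonneg_right htail0
  · obtain ⟨d, rfl⟩ : ∃ d, m = N + d := ⟨m - N, by omega⟩
    rw [Finset.range_eq_Ico, ← Finset.sum_Ico_consecutive _ (Nat.zero_le N) (by omega : N ≤ N + d)]
    rw [← Finset.range_eq_Ico]
    apply add_le_add le_rfl
    rw [Finset.sum_Ico_eq_sum_range]
    simp only [Nat.add_sub_cancel_left]
    have : ∀ i, gg ((cseq c0 (N + i) : ℝ)) = gg ((cseq (cseq c0 N) i : ℝ)) := by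
      intro i; rw [cseq_add]
    rw [Finset.sum_congr rfl (fun i _ => this i)]
    exact tail_sum (cseq c0 N) h101 L hL hL0 d

lemma sum_peel (f : ℕ → ℝ) (hf : ∀ n, 0 ≤ f n) (n : ℕ) :
    ∑ i ∈ Finset.range n, f i ≤ f 0 + ∑ i ∈ Finset.range n, f (i+1) := by
  calc ∑ i ∈ Finset.range n, f i ≤ ∑ i ∈ Finset.range (n+1), f i :=
      Finset.sum_le_sum_of_subset_of_nonneg (Finset.range_subset_range.mpr (by omega)) (fun i _ _ => hf i)
    _ = ∑ i ∈ Finset.range n, f (i+1) + f 0 := Finset.sum_range_succ' f n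
    _ = f 0 + ∑ i ∈ Finset.range n, f (i+1) := by ring

lemma le_floor_inv {x : ℝ} {m : ℤ} (hx : 0 < x) (h1 : (m:ℝ) * x ≤ 1) : m ≤ ⌊x⁻¹⌋ := by
  apply Int.le_floor.mpr
  nlinarith [inv_mul_cancel₀ (ne_of_gt hx), inv_pos.mpr hx]

lemma floor_inv_eq {x : ℝ} {m : ℤ} (hx : 0 < x) (h1 : (m:ℝ) * x ≤ 1) (h2 : 1 < ((m:ℝ)+1) * x) :
    ⌊x⁻¹⌋ = m := by
  have hge := le_floor_inv hx h1
  have hlt : x⁻¹ < (m:ℝ)+1 := by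
    nlinarith [inv_mul_cancel₀ (ne_of_gt hx), inv_pos.mpr hx]
  have h3 : ⌊x⁻¹⌋ < m + 1 := Int.floor_lt.mpr (by push_cast; linarith)
  omega

lemma gg_val_le {c D : ℝ} (hc : 1 ≤ c) (hD : Real.log (1 + c^2) ≤ D) : gg c ≤ D / c := by
  have h0 : (0:ℝ) < c := by linarith
  have hln : (0:ℝ) ≤ Real.log (1 + c^2) := Real.log_nonneg (by nlinarith)
  exact div_le_div₀ (by linarith) hD h0 le_rfl

lemma gg2le : gg (2:ℝ) ≤ 1.60990/2 :=
  gg_val_le (by norm_num) (by rw [show (1+(2:ℝ)^2) = 5 by norm_num]; exact logle_5)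
lemma gg3le : gg (3:ℝ) ≤ 2.30304/3 :=
  gg_val_le (by norm_num) (by rw [show (1+(3:ℝ)^2) = 10 by norm_num]; exact logle_10)
lemma gg4le : gg (4:ℝ) ≤ 2.83561/4 :=
  gg_val_le (by norm_num) (by rw [show (1+(4:ℝ)^2) = 17 by norm_num]; exact logle_17)
lemma gg5le : gg (5:ℝ) ≤ 3.26187/5 :=
  gg_val_le (by norm_num) (by rw [show (1+(5:ℝ)^2) = 26 by norm_num]; exact logle_26)
lemma gg6le : gg (6:ℝ) ≤ 3.61977/6 :=
  gg_val_le (by norm_num) (by rw [show (1+(6:ℝ)^2) = 37 by norm_num]; exact logle_37)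
lemma gg7le : gg (7:ℝ) ≤ 3.91425/7 :=
  gg_val_le (by norm_num) (by rw [show (1+(7:ℝ)^2) = 50 by norm_num]; exact logle_50)
lemma gg8le : gg (8:ℝ) ≤ 4.18902/8 :=
  gg_val_le (by norm_num) (by rw [show (1+(8:ℝ)^2) = 65 by norm_num]; exact logle_65)
lemma gg9le : gg (9:ℝ) ≤ 4.41882/9 :=
  gg_val_le (by norm_num) (by rw [show (1+(9:ℝ)^2) = 82 by norm_num]; exact logle_82)
lemma gg12le : gg (12:ℝ) ≤ 4.99066/12 :=
  gg_val_le (by norm_num) (by rw [show (1+(12:ℝ)^2) = 145 by norm_num]; exact logle_145)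
lemma gg13le : gg (13:ℝ) ≤ 5.14910/13 :=
  gg_val_le (by norm_num) (by rw [show (1+(13:ℝ)^2) = 170 by norm_num]; exact logle_170)
lemma gg21le : gg (21:ℝ) ≤ 6.09970/21 :=
  gg_val_le (by norm_num) (by rw [show (1+(21:ℝ)^2) = 442 by norm_num]; exact logle_442)
lemma gg24le : gg (24:ℝ) ≤ 6.37696/24 :=
  gg_val_le (by norm_num) (by rw [show (1+(24:ℝ)^2) = 577 by norm_num]; exact logle_577)
lemma gg25le : gg (25:ℝ) ≤ 6.46938/25 :=
  gg_val_le (by norm_num) (by rw [show (1+(25:ℝ)^2) = 626 by norm_num]; exact logle_626)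
lemma gg42le : gg (42:ℝ) ≤ 7.48599/42 :=
  gg_val_le (by norm_num) (by rw [show (1+(42:ℝ)^2) = 1765 by norm_num]; exact logle_1765)
lemma gg43le : gg (43:ℝ) ≤ 7.52560/43 :=
  gg_val_le (by norm_num) (by rw [show (1+(43:ℝ)^2) = 1850 by norm_num]; exact logle_1850)
lemma gg57le : gg (57:ℝ) ≤ 8.08672/57 :=
  gg_val_le (by norm_num) (by rw [show (1+(57:ℝ)^2) = 3250 by norm_num]; exact logle_3250)
lemma gg73le : gg (73:ℝ) ≤ 8.66434/73 :=
  gg_val_le (by norm_num) (by rw [show (1+(73:ℝ)^2) = 5330 by norm_num]; exact logle_5330)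
lemma gg157le : gg (157:ℝ) ≤ 10.39721/157 :=
  gg_val_le (by norm_num) (by rw [show (1+(157:ℝ)^2) = 24650 by norm_num]; exact logle_24650)
lemma gg421le : gg (421:ℝ) ≤ 12.47665/421 :=
  gg_val_le (by norm_num) (by rw [show (1+(421:ℝ)^2) = 177242 by norm_num]; exact logle_177242)
lemma gg601le : gg (601:ℝ) ≤ 13.16980/601 :=
  gg_val_le (by norm_num) (by rw [show (1+(601:ℝ)^2) = 361202 by norm_num]; exact logle_361202)

lemma LbBound (m : ℕ) : ∑ ℓ ∈ Finset.range m, gg ((sylv 1 ℓ : ℝ)) ≤ 2.3198 := by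
  have hα0 : (0:ℝ) < 1 := one_pos
  have hα1 : (1:ℝ) ≤ 1 := le_refl 1
  have hs : ∀ n, 2 ≤ sylv 1 n := fun n => sylv_ge_two hα0 hα1 n
  have hrec : ∀ n, sylv 1 n * (sylv 1 n - 1) + 1 ≤ sylv 1 (n+1) := fun n => sylv_growth hα0 hα1 n
  have hL : Real.log ((cseq 2 4 : ℝ)) ≤ 7.62462 := by
    rw [show cseq 2 4 = (1807:ℤ) from by decide]
    push_cast
    exact logle_1807
  have hcb := chain_bound (fun n => sylv 1 n) hs hrec 2 (by norm_num) (hs 0) 4 7.62462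
    (by decide) hL (by norm_num) m
  refine le_trans hcb ?_
  have e4 : ((cseq 2 4 : ℝ)) = 1807 := by
    rw [show cseq 2 4 = (1807:ℤ) from by decide]; push_cast; ring
  rw [e4]
  rw [Finset.sum_range_succ, Finset.sum_range_succ, Finset.sum_range_succ, Finset.sum_range_succ,
    Finset.sum_range_zero]
  have e0 : ((cseq 2 0 : ℝ)) = 2 := by rw [show cseq 2 0 = (2:ℤ) from by decide]; push_cast; ring
  have e1 : ((cseq 2 1 : ℝ)) = 3 := by rw [show cseq 2 1 = (3:ℤ) from by decide]; push_cast; ring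
  have e2 : ((cseq 2 2 : ℝ)) = 7 := by rw [show cseq 2 2 = (7:ℤ) from by decide]; push_cast; ring
  have e3 : ((cseq 2 3 : ℝ)) = 43 := by rw [show cseq 2 3 = (43:ℤ) from by decide]; push_cast; ring
  rw [e0, e1, e2, e3]
  have := gg2le; have := gg3le; have := gg7le; have := gg43le
  norm_num
  linarith

lemma sylv_lb {α : ℝ} (i : ℕ) {R : ℝ} (hR : Rem α i = R) {m : ℤ} (hx : 0 < R)
    (hm : (m:ℝ) * R ≤ 1) : m + 1 ≤ sylv α i := by
  rw [sylv_eq, hR]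
  have := le_floor_inv hx hm
  omega

lemma sylv_eqv {α : ℝ} (i : ℕ) {R : ℝ} (hR : Rem α i = R) {m : ℤ} (hx : 0 < R)
    (hm1 : (m:ℝ) * R ≤ 1) (hm2 : 1 < ((m:ℝ)+1) * R) : sylv α i = m + 1 := by
  rw [sylv_eq, hR, floor_inv_eq hx hm1 hm2]

lemma innerChain0 {α : ℝ} (hα0 : 0 < α) (hα1 : α ≤ 1) (c0 : ℤ) (hc2 : 2 ≤ c0)
    (h0 : c0 ≤ sylv α 0) (N : ℕ) (L : ℝ) (h101 : 101 ≤ cseq c0 N)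
    (hL : Real.log ((cseq c0 N : ℝ)) ≤ L) (hL0 : 0 ≤ L) (m : ℕ) :
    ∑ i ∈ Finset.range m, gg ((sylv α i : ℝ)) ≤
      ∑ n ∈ Finset.range N, gg ((cseq c0 n : ℝ)) + 150/49 * L / ((cseq c0 N : ℝ)) :=
  chain_bound (fun i => sylv α i) (fun i => sylv_ge_two hα0 hα1 i)
    (fun i => sylv_growth hα0 hα1 i) c0 hc2 h0 N L h101 hL hL0 m

lemma innerChain1 {α : ℝ} (hα0 : 0 < α) (hα1 : α ≤ 1) (c0 : ℤ) (hc2 : 2 ≤ c0)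
    (h0 : c0 ≤ sylv α 1) (N : ℕ) (L : ℝ) (h101 : 101 ≤ cseq c0 N)
    (hL : Real.log ((cseq c0 N : ℝ)) ≤ L) (hL0 : 0 ≤ L) (m : ℕ) :
    ∑ i ∈ Finset.range m, gg ((sylv α i : ℝ)) ≤
      gg ((sylv α 0 : ℝ)) +
        (∑ n ∈ Finset.range N, gg ((cseq c0 n : ℝ)) + 150/49 * L / ((cseq c0 N : ℝ))) := by
  have hnn : ∀ i : ℕ, 0 ≤ gg ((sylv α i : ℝ)) :=
    fun i => gg_nonneg (le_trans one_le_two (sylv_real_ge_two hα0 hα1 i))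
  have p1 := sum_peel (fun i => gg ((sylv α i : ℝ))) hnn m
  have hcb := chain_bound (fun i => sylv α (i+1)) (fun i => sylv_ge_two hα0 hα1 (i+1))
      (fun i => sylv_growth hα0 hα1 (i+1)) c0 hc2 h0 N L h101 hL hL0 m
  linarith

lemma innerChain2 {α : ℝ} (hα0 : 0 < α) (hα1 : α ≤ 1) (c0 : ℤ) (hc2 : 2 ≤ c0)
    (h0 : c0 ≤ sylv α 2) (N : ℕ) (L : ℝ) (h101 : 101 ≤ cseq c0 N)
    (hL : Real.log ((cseq c0 N : ℝ)) ≤ L) (hL0 : 0 ≤ L) (m : ℕ) :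
    ∑ i ∈ Finset.range m, gg ((sylv α i : ℝ)) ≤
      gg ((sylv α 0 : ℝ)) + gg ((sylv α 1 : ℝ)) +
        (∑ n ∈ Finset.range N, gg ((cseq c0 n : ℝ)) + 150/49 * L / ((cseq c0 N : ℝ))) := by
  have hnn : ∀ i : ℕ, 0 ≤ gg ((sylv α i : ℝ)) :=
    fun i => gg_nonneg (le_trans one_le_two (sylv_real_ge_two hα0 hα1 i))
  have p1 := sum_peel (fun i => gg ((sylv α i : ℝ))) hnn m
  have p2 := sum_peel (fun i => gg ((sylv α (i+1) : ℝ))) (fun i => hnn (i+1)) m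
  have hcb := chain_bound (fun i => sylv α (i+2)) (fun i => sylv_ge_two hα0 hα1 (i+2))
      (fun i => sylv_growth hα0 hα1 (i+2)) c0 hc2 h0 N L h101 hL hL0 m
  norm_num at p1 p2
  have e : ∀ i : ℕ, i + 1 + 1 = i + 2 := fun i => rfl
  simp only [e] at p2
  linarith

lemma cseq_cast (c0 : ℤ) (n : ℕ) (v : ℤ) (h : cseq c0 n = v) : ((cseq c0 n : ℝ)) = (v:ℝ) := by
  rw [h]


lemma leaf5 (k : ℝ) (hk0 : (0:ℝ) < k) (hlo : 4 < k) (hhi : k ≤ 5) (n : ℕ) :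
    gg k + ∑ i ∈ Finset.range n, gg ((sylv (1-1/k) i : ℝ)) ≤ 2.6802 := by
  set α := (1 : ℝ) - 1/k with hαdef
  have hu2 : 1/k < 1/2 := by rw [div_lt_div_iff₀ hk0 (by norm_num)]; linarith
  have hu4 : 1/k < 1/4 := by rw [div_lt_div_iff₀ hk0 (by norm_num)]; linarith
  have hu6 : 1/6 ≤ 1/k := by rw [div_le_div_iff₀ (by norm_num) hk0]; linarith
  have hu5 : 1/5 ≤ 1/k := by rw [div_le_div_iff₀ (by norm_num) hk0]; linarith
  have hα0 : 0 < α := by rw [hαdef]; linarith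
  have hα1 : α ≤ 1 := by rw [hαdef]; linarith
  have hs0 : sylv α 0 = 2 := by
    have h := sylv_eqv 0 (rem_zero α) (m := 1) hα0 (by push_cast; norm_num; linarith)
      (by push_cast; norm_num; rw [hαdef]; linarith)
    omega
  have hrem1 : Rem α 1 = α - 1/2 := by rw [rem_succ, rem_zero, hs0]; norm_num
  have hx1 : (0:ℝ) < α - 1/2 := by rw [hαdef]; linarith
  have hs1 : sylv α 1 = 4 := by
    have h := sylv_eqv 1 hrem1 (m := 3) hx1 (by push_cast; norm_num; rw [hαdef]; linarith)
      (by push_cast; norm_num; rw [hαdef]; linarith)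
    omega
  have hrem2 : Rem α 2 = α - (1/2 + 1/4) := by rw [rem_succ, hrem1, hs1]; push_cast; ring
  have hx2 : (0:ℝ) < α - (1/2 + 1/4) := by rw [hαdef]; linarith
  have hs2 : (21:ℤ) ≤ sylv α 2 := by
    have h := sylv_lb 2 hrem2 (m := 20) hx2 (by push_cast; norm_num; rw [hαdef]; linarith)
    omega
  have hL : Real.log ((cseq 21 2 : ℝ)) ≤ 12.13008 := by
    rw [cseq_cast 21 2 176821 (by decide)]; push_cast; exact logle_176821
  have hic := innerChain2 hα0 hα1 21 (by norm_num) hs2 2 12.13008 (by decide) hL (by norm_num) n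
  rw [Finset.sum_range_succ, Finset.sum_range_succ, Finset.sum_range_zero] at hic
  rw [cseq_cast 21 0 21 (by decide), cseq_cast 21 1 421 (by decide),
    cseq_cast 21 2 176821 (by decide)] at hic
  push_cast at hic
  rw [hs0, hs1] at hic
  push_cast at hic
  have hgk : gg k ≤ gg 4 := gg_anti (by norm_num) (Set.mem_Ici.mpr (by linarith)) (by linarith)
  have := gg4le
  have := gg2le; have := gg4le; have := gg21le; have := gg421le
  norm_num at hic ⊢
  linarith

lemma leaf6 (k : ℝ) (hk0 : (0:ℝ) < k) (hlo : 5 < k) (hhi : k ≤ 6) (n : ℕ) :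
    gg k + ∑ i ∈ Finset.range n, gg ((sylv (1-1/k) i : ℝ)) ≤ 2.6802 := by
  set α := (1 : ℝ) - 1/k with hαdef
  have hu2 : 1/k < 1/2 := by rw [div_lt_div_iff₀ hk0 (by norm_num)]; linarith
  have hu4 : 1/k < 1/4 := by rw [div_lt_div_iff₀ hk0 (by norm_num)]; linarith
  have hu5 : 1/k < 1/5 := by rw [div_lt_div_iff₀ hk0 (by norm_num)]; linarith
  have hu6 : 1/6 ≤ 1/k := by rw [div_le_div_iff₀ (by norm_num) hk0]; linarith
  have hα0 : 0 < α := by rw [hαdef]; linarith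
  have hα1 : α ≤ 1 := by rw [hαdef]; linarith
  have hs0 : sylv α 0 = 2 := by
    have h := sylv_eqv 0 (rem_zero α) (m := 1) hα0 (by push_cast; norm_num; linarith)
      (by push_cast; norm_num; rw [hαdef]; linarith)
    omega
  have hrem1 : Rem α 1 = α - 1/2 := by rw [rem_succ, rem_zero, hs0]; norm_num
  have hx1 : (0:ℝ) < α - 1/2 := by rw [hαdef]; linarith
  have hs1 : sylv α 1 = 4 := by
    have h := sylv_eqv 1 hrem1 (m := 3) hx1 (by push_cast; norm_num; rw [hαdef]; linarith)
      (by push_cast; norm_num; rw [hαdef]; linarith)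
    omega
  have hrem2 : Rem α 2 = α - (1/2 + 1/4) := by rw [rem_succ, hrem1, hs1]; push_cast; ring
  have hx2 : (0:ℝ) < α - (1/2 + 1/4) := by rw [hαdef]; linarith
  have hs2 : (13:ℤ) ≤ sylv α 2 := by
    have h := sylv_lb 2 hrem2 (m := 12) hx2 (by push_cast; norm_num; rw [hαdef]; linarith)
    omega
  have hL : Real.log ((cseq 13 2 : ℝ)) ≤ 10.39721 := by
    rw [cseq_cast 13 2 24493 (by decide)]; push_cast; exact logle_24493
  have hic := innerChain2 hα0 hα1 13 (by norm_num) hs2 2 10.39721 (by decide) hL (by norm_num) n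
  rw [Finset.sum_range_succ, Finset.sum_range_succ, Finset.sum_range_zero] at hic
  rw [cseq_cast 13 0 13 (by decide), cseq_cast 13 1 157 (by decide),
    cseq_cast 13 2 24493 (by decide)] at hic
  push_cast at hic
  rw [hs0, hs1] at hic
  push_cast at hic
  have hgk : gg k ≤ gg 5 := gg_anti (by norm_num) (Set.mem_Ici.mpr (by linarith)) (by linarith)
  have := gg5le
  have := gg2le; have := gg4le; have := gg13le; have := gg157le
  norm_num at hic ⊢
  linarith

lemma leaf7 (k : ℝ) (hk0 : (0:ℝ) < k) (hlo : 6 < k) (hhi : k ≤ 8) (n : ℕ) :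
    gg k + ∑ i ∈ Finset.range n, gg ((sylv (1-1/k) i : ℝ)) ≤ 2.6802 := by
  set α := (1 : ℝ) - 1/k with hαdef
  have hu2 : 1/k < 1/2 := by rw [div_lt_div_iff₀ hk0 (by norm_num)]; linarith
  have hu6 : 1/k < 1/6 := by rw [div_lt_div_iff₀ hk0 (by norm_num)]; linarith
  have hu8 : 1/8 ≤ 1/k := by rw [div_le_div_iff₀ (by norm_num) hk0]; linarith
  have hα0 : 0 < α := by rw [hαdef]; linarith
  have hα1 : α ≤ 1 := by rw [hαdef]; linarith
  have hs0 : sylv α 0 = 2 := by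
    have h := sylv_eqv 0 (rem_zero α) (m := 1) hα0 (by push_cast; norm_num; linarith)
      (by push_cast; norm_num; rw [hαdef]; linarith)
    omega
  have hrem1 : Rem α 1 = α - 1/2 := by rw [rem_succ, rem_zero, hs0]; norm_num
  have hx1 : (0:ℝ) < α - 1/2 := by rw [hαdef]; linarith
  have hs1 : sylv α 1 = 3 := by
    have h := sylv_eqv 1 hrem1 (m := 2) hx1 (by push_cast; norm_num; rw [hαdef]; linarith)
      (by push_cast; norm_num; rw [hαdef]; linarith)
    omega
  have hrem2 : Rem α 2 = α - (1/2 + 1/3) := by rw [rem_succ, hrem1, hs1]; push_cast; ring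
  have hx2 : (0:ℝ) < α - (1/2 + 1/3) := by rw [hαdef]; linarith
  have hs2 : (25:ℤ) ≤ sylv α 2 := by
    have h := sylv_lb 2 hrem2 (m := 24) hx2 (by push_cast; norm_num; rw [hαdef]; linarith)
    omega
  have hL : Real.log ((cseq 25 2 : ℝ)) ≤ 12.82323 := by
    rw [cseq_cast 25 2 360601 (by decide)]; push_cast; exact logle_360601
  have hic := innerChain2 hα0 hα1 25 (by norm_num) hs2 2 12.82323 (by decide) hL (by norm_num) n
  rw [Finset.sum_range_succ, Finset.sum_range_succ, Finset.sum_range_zero] at hic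
  rw [cseq_cast 25 0 25 (by decide), cseq_cast 25 1 601 (by decide),
    cseq_cast 25 2 360601 (by decide)] at hic
  push_cast at hic
  rw [hs0, hs1] at hic
  push_cast at hic
  have hgk : gg k ≤ gg 6 := gg_anti (by norm_num) (Set.mem_Ici.mpr (by linarith)) (by linarith)
  have := gg6le
  have := gg2le; have := gg3le; have := gg25le; have := gg601le
  norm_num at hic ⊢
  linarith

lemma leaf8 (k : ℝ) (hk0 : (0:ℝ) < k) (hlo : 8 < k) (hhi : k ≤ 12) (n : ℕ) :
    gg k + ∑ i ∈ Finset.range n, gg ((sylv (1-1/k) i : ℝ)) ≤ 2.6802 := by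
  set α := (1 : ℝ) - 1/k with hαdef
  have hu2 : 1/k < 1/2 := by rw [div_lt_div_iff₀ hk0 (by norm_num)]; linarith
  have hu6 : 1/k < 1/6 := by rw [div_lt_div_iff₀ hk0 (by norm_num)]; linarith
  have hu12 : 1/12 ≤ 1/k := by rw [div_le_div_iff₀ (by norm_num) hk0]; linarith
  have hα0 : 0 < α := by rw [hαdef]; linarith
  have hα1 : α ≤ 1 := by rw [hαdef]; linarith
  have hs0 : sylv α 0 = 2 := by
    have h := sylv_eqv 0 (rem_zero α) (m := 1) hα0 (by push_cast; norm_num; linarith)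
      (by push_cast; norm_num; rw [hαdef]; linarith)
    omega
  have hrem1 : Rem α 1 = α - 1/2 := by rw [rem_succ, rem_zero, hs0]; norm_num
  have hx1 : (0:ℝ) < α - 1/2 := by rw [hαdef]; linarith
  have hs1 : sylv α 1 = 3 := by
    have h := sylv_eqv 1 hrem1 (m := 2) hx1 (by push_cast; norm_num; rw [hαdef]; linarith)
      (by push_cast; norm_num; rw [hαdef]; linarith)
    omega
  have hrem2 : Rem α 2 = α - (1/2 + 1/3) := by rw [rem_succ, hrem1, hs1]; push_cast; ring
  have hx2 : (0:ℝ) < α - (1/2 + 1/3) := by rw [hαdef]; linarith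
  have hs2 : (13:ℤ) ≤ sylv α 2 := by
    have h := sylv_lb 2 hrem2 (m := 12) hx2 (by push_cast; norm_num; rw [hαdef]; linarith)
    omega
  have hL : Real.log ((cseq 13 2 : ℝ)) ≤ 10.39721 := by
    rw [cseq_cast 13 2 24493 (by decide)]; push_cast; exact logle_24493
  have hic := innerChain2 hα0 hα1 13 (by norm_num) hs2 2 10.39721 (by decide) hL (by norm_num) n
  rw [Finset.sum_range_succ, Finset.sum_range_succ, Finset.sum_range_zero] at hic
  rw [cseq_cast 13 0 13 (by decide), cseq_cast 13 1 157 (by decide),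
    cseq_cast 13 2 24493 (by decide)] at hic
  push_cast at hic
  rw [hs0, hs1] at hic
  push_cast at hic
  have hgk : gg k ≤ gg 8 := gg_anti (by norm_num) (Set.mem_Ici.mpr (by linarith)) (by linarith)
  have := gg8le
  have := gg2le; have := gg3le; have := gg13le; have := gg157le
  norm_num at hic ⊢
  linarith

lemma leaf9 (k : ℝ) (hk0 : (0:ℝ) < k) (hlo : 12 < k) (hhi : k ≤ 24) (n : ℕ) :
    gg k + ∑ i ∈ Finset.range n, gg ((sylv (1-1/k) i : ℝ)) ≤ 2.6802 := by
  set α := (1 : ℝ) - 1/k with hαdef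
  have hu2 : 1/k < 1/2 := by rw [div_lt_div_iff₀ hk0 (by norm_num)]; linarith
  have hu6 : 1/k < 1/6 := by rw [div_lt_div_iff₀ hk0 (by norm_num)]; linarith
  have hu24 : 1/24 ≤ 1/k := by rw [div_le_div_iff₀ (by norm_num) hk0]; linarith
  have hα0 : 0 < α := by rw [hαdef]; linarith
  have hα1 : α ≤ 1 := by rw [hαdef]; linarith
  have hs0 : sylv α 0 = 2 := by
    have h := sylv_eqv 0 (rem_zero α) (m := 1) hα0 (by push_cast; norm_num; linarith)
      (by push_cast; norm_num; rw [hαdef]; linarith)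
    omega
  have hrem1 : Rem α 1 = α - 1/2 := by rw [rem_succ, rem_zero, hs0]; norm_num
  have hx1 : (0:ℝ) < α - 1/2 := by rw [hαdef]; linarith
  have hs1 : sylv α 1 = 3 := by
    have h := sylv_eqv 1 hrem1 (m := 2) hx1 (by push_cast; norm_num; rw [hαdef]; linarith)
      (by push_cast; norm_num; rw [hαdef]; linarith)
    omega
  have hrem2 : Rem α 2 = α - (1/2 + 1/3) := by rw [rem_succ, hrem1, hs1]; push_cast; ring
  have hx2 : (0:ℝ) < α - (1/2 + 1/3) := by rw [hαdef]; linarith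
  have hs2 : (9:ℤ) ≤ sylv α 2 := by
    have h := sylv_lb 2 hrem2 (m := 8) hx2 (by push_cast; norm_num; rw [hαdef]; linarith)
    omega
  have hL : Real.log ((cseq 9 2 : ℝ)) ≤ 8.66434 := by
    rw [cseq_cast 9 2 5257 (by decide)]; push_cast; exact logle_5257
  have hic := innerChain2 hα0 hα1 9 (by norm_num) hs2 2 8.66434 (by decide) hL (by norm_num) n
  rw [Finset.sum_range_succ, Finset.sum_range_succ, Finset.sum_range_zero] at hic
  rw [cseq_cast 9 0 9 (by decide), cseq_cast 9 1 73 (by decide),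
    cseq_cast 9 2 5257 (by decide)] at hic
  push_cast at hic
  rw [hs0, hs1] at hic
  push_cast at hic
  have hgk : gg k ≤ gg 12 := gg_anti (by norm_num) (Set.mem_Ici.mpr (by linarith)) (by linarith)
  have := gg12le
  have := gg2le; have := gg3le; have := gg9le; have := gg73le
  norm_num at hic ⊢
  linarith

lemma leaf10 (k : ℝ) (hk0 : (0:ℝ) < k) (hlo : 24 < k) (hhi : k ≤ 42) (n : ℕ) :
    gg k + ∑ i ∈ Finset.range n, gg ((sylv (1-1/k) i : ℝ)) ≤ 2.6802 := by
  set α := (1 : ℝ) - 1/k with hαdef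
  have hu2 : 1/k < 1/2 := by rw [div_lt_div_iff₀ hk0 (by norm_num)]; linarith
  have hu6 : 1/k < 1/6 := by rw [div_lt_div_iff₀ hk0 (by norm_num)]; linarith
  have hu42 : 1/42 ≤ 1/k := by rw [div_le_div_iff₀ (by norm_num) hk0]; linarith
  have hα0 : 0 < α := by rw [hαdef]; linarith
  have hα1 : α ≤ 1 := by rw [hαdef]; linarith
  have hs0 : sylv α 0 = 2 := by
    have h := sylv_eqv 0 (rem_zero α) (m := 1) hα0 (by push_cast; norm_num; linarith)
      (by push_cast; norm_num; rw [hαdef]; linarith)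
    omega
  have hrem1 : Rem α 1 = α - 1/2 := by rw [rem_succ, rem_zero, hs0]; norm_num
  have hx1 : (0:ℝ) < α - 1/2 := by rw [hαdef]; linarith
  have hs1 : sylv α 1 = 3 := by
    have h := sylv_eqv 1 hrem1 (m := 2) hx1 (by push_cast; norm_num; rw [hαdef]; linarith)
      (by push_cast; norm_num; rw [hαdef]; linarith)
    omega
  have hrem2 : Rem α 2 = α - (1/2 + 1/3) := by rw [rem_succ, hrem1, hs1]; push_cast; ring
  have hx2 : (0:ℝ) < α - (1/2 + 1/3) := by rw [hαdef]; linarith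
  have hs2 : (8:ℤ) ≤ sylv α 2 := by
    have h := sylv_lb 2 hrem2 (m := 7) hx2 (by push_cast; norm_num; rw [hαdef]; linarith)
    omega
  have hL : Real.log ((cseq 8 2 : ℝ)) ≤ 8.31777 := by
    rw [cseq_cast 8 2 3193 (by decide)]; push_cast; exact logle_3193
  have hic := innerChain2 hα0 hα1 8 (by norm_num) hs2 2 8.31777 (by decide) hL (by norm_num) n
  rw [Finset.sum_range_succ, Finset.sum_range_succ, Finset.sum_range_zero] at hic
  rw [cseq_cast 8 0 8 (by decide), cseq_cast 8 1 57 (by decide),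
    cseq_cast 8 2 3193 (by decide)] at hic
  push_cast at hic
  rw [hs0, hs1] at hic
  push_cast at hic
  have hgk : gg k ≤ gg 24 := gg_anti (by norm_num) (Set.mem_Ici.mpr (by linarith)) (by linarith)
  have := gg24le
  have := gg2le; have := gg3le; have := gg8le; have := gg57le
  norm_num at hic ⊢
  linarith

lemma leaf11 (k : ℝ) (hk0 : (0:ℝ) < k) (hlo : 42 < k) (n : ℕ) :
    gg k + ∑ i ∈ Finset.range n, gg ((sylv (1-1/k) i : ℝ)) ≤ 2.6802 := by
  set α := (1 : ℝ) - 1/k with hαdef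
  have hu2 : 1/k < 1/2 := by rw [div_lt_div_iff₀ hk0 (by norm_num)]; linarith
  have hu6 : 1/k < 1/6 := by rw [div_lt_div_iff₀ hk0 (by norm_num)]; linarith
  have hupos : 0 < 1/k := by positivity
  have hα0 : 0 < α := by rw [hαdef]; linarith
  have hα1 : α ≤ 1 := by rw [hαdef]; linarith
  have hs0 : sylv α 0 = 2 := by
    have h := sylv_eqv 0 (rem_zero α) (m := 1) hα0 (by push_cast; norm_num; linarith)
      (by push_cast; norm_num; rw [hαdef]; linarith)
    omega
  have hrem1 : Rem α 1 = α - 1/2 := by rw [rem_succ, rem_zero, hs0]; norm_num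
  have hx1 : (0:ℝ) < α - 1/2 := by rw [hαdef]; linarith
  have hs1 : sylv α 1 = 3 := by
    have h := sylv_eqv 1 hrem1 (m := 2) hx1 (by push_cast; norm_num; rw [hαdef]; linarith)
      (by push_cast; norm_num; rw [hαdef]; linarith)
    omega
  have hrem2 : Rem α 2 = α - (1/2 + 1/3) := by rw [rem_succ, hrem1, hs1]; push_cast; ring
  have hx2 : (0:ℝ) < α - (1/2 + 1/3) := by rw [hαdef]; linarith
  have hs2 : (7:ℤ) ≤ sylv α 2 := by
    have h := sylv_lb 2 hrem2 (m := 6) hx2 (by push_cast; norm_num; rw [hαdef]; linarith)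
    omega
  have hL : Real.log ((cseq 7 2 : ℝ)) ≤ 7.62462 := by
    rw [cseq_cast 7 2 1807 (by decide)]; push_cast; exact logle_1807
  have hic := innerChain2 hα0 hα1 7 (by norm_num) hs2 2 7.62462 (by decide) hL (by norm_num) n
  rw [Finset.sum_range_succ, Finset.sum_range_succ, Finset.sum_range_zero] at hic
  rw [cseq_cast 7 0 7 (by decide), cseq_cast 7 1 43 (by decide),
    cseq_cast 7 2 1807 (by decide)] at hic
  push_cast at hic
  rw [hs0, hs1] at hic
  push_cast at hic
  have hgk : gg k ≤ gg 42 := gg_anti (by norm_num) (Set.mem_Ici.mpr (by linarith)) (by linarith)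
  have := gg42le
  have := gg2le; have := gg3le; have := gg7le; have := gg43le
  norm_num at hic ⊢
  linarith

lemma leaf3 (k : ℝ) (hk0 : (0:ℝ) < k) (hlo : 2 < k) (hhi : k ≤ 3) (n : ℕ) :
    gg k + ∑ i ∈ Finset.range n, gg ((sylv (1-1/k) i : ℝ)) ≤ 2.6802 := by
  set α := (1 : ℝ) - 1/k with hαdef
  have hu2 : 1/k < 1/2 := by rw [div_lt_div_iff₀ hk0 (by norm_num)]; linarith
  have hu3 : 1/3 ≤ 1/k := by rw [div_le_div_iff₀ (by norm_num) hk0]; linarith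
  have hα0 : 0 < α := by rw [hαdef]; linarith
  have hα1 : α ≤ 1 := by rw [hαdef]; linarith
  have hs0 : sylv α 0 = 2 := by
    have h := sylv_eqv 0 (rem_zero α) (m := 1) hα0 (by push_cast; norm_num; linarith)
      (by push_cast; norm_num; rw [hαdef]; linarith)
    omega
  have hrem1 : Rem α 1 = α - 1/2 := by rw [rem_succ, rem_zero, hs0]; norm_num
  have hx1 : (0:ℝ) < α - 1/2 := by rw [hαdef]; linarith
  have hs1 : (7:ℤ) ≤ sylv α 1 := by
    have h := sylv_lb 1 hrem1 (m := 6) hx1 (by push_cast; norm_num; rw [hαdef]; linarith)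
    omega
  have hL : Real.log ((cseq 7 2 : ℝ)) ≤ 7.62462 := by
    rw [cseq_cast 7 2 1807 (by decide)]; push_cast; exact logle_1807
  have hic := innerChain1 hα0 hα1 7 (by norm_num) hs1 2 7.62462 (by decide) hL (by norm_num) n
  rw [Finset.sum_range_succ, Finset.sum_range_succ, Finset.sum_range_zero] at hic
  rw [cseq_cast 7 0 7 (by decide), cseq_cast 7 1 43 (by decide), cseq_cast 7 2 1807 (by decide)] at hic
  push_cast at hic
  rw [hs0] at hic
  push_cast at hic
  have hgk : gg k ≤ gg 2 := gg_anti (by norm_num) (Set.mem_Ici.mpr (by linarith)) (by linarith)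
  have := gg2le
  have := gg2le; have := gg7le; have := gg43le
  norm_num at hic ⊢
  linarith

lemma leaf4 (k : ℝ) (hk0 : (0:ℝ) < k) (hlo : 3 < k) (hhi : k ≤ 4) (n : ℕ) :
    gg k + ∑ i ∈ Finset.range n, gg ((sylv (1-1/k) i : ℝ)) ≤ 2.6802 := by
  set α := (1 : ℝ) - 1/k with hαdef
  have hu2 : 1/k < 1/2 := by rw [div_lt_div_iff₀ hk0 (by norm_num)]; linarith
  have hu4 : 1/4 ≤ 1/k := by rw [div_le_div_iff₀ (by norm_num) hk0]; linarith
  have hα0 : 0 < α := by rw [hαdef]; linarith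
  have hα1 : α ≤ 1 := by rw [hαdef]; linarith
  have hs0 : sylv α 0 = 2 := by
    have h := sylv_eqv 0 (rem_zero α) (m := 1) hα0 (by push_cast; norm_num; linarith)
      (by push_cast; norm_num; rw [hαdef]; linarith)
    omega
  have hrem1 : Rem α 1 = α - 1/2 := by rw [rem_succ, rem_zero, hs0]; norm_num
  have hx1 : (0:ℝ) < α - 1/2 := by rw [hαdef]; linarith
  have hs1 : (5:ℤ) ≤ sylv α 1 := by
    have h := sylv_lb 1 hrem1 (m := 4) hx1 (by push_cast; norm_num; rw [hαdef]; linarith)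
    omega
  have hL : Real.log ((cseq 5 3 : ℝ)) ≤ 12.13008 := by
    rw [cseq_cast 5 3 176821 (by decide)]; push_cast; exact logle_176821
  have hic := innerChain1 hα0 hα1 5 (by norm_num) hs1 3 12.13008 (by decide) hL (by norm_num) n
  rw [Finset.sum_range_succ, Finset.sum_range_succ, Finset.sum_range_succ, Finset.sum_range_zero] at hic
  rw [cseq_cast 5 0 5 (by decide), cseq_cast 5 1 21 (by decide), cseq_cast 5 2 421 (by decide), cseq_cast 5 3 176821 (by decide)] at hic
  push_cast at hic
  rw [hs0] at hic
  push_cast at hic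
  have hgk : gg k ≤ gg 3 := gg_anti (by norm_num) (Set.mem_Ici.mpr (by linarith)) (by linarith)
  have := gg3le
  have := gg2le; have := gg5le; have := gg21le; have := gg421le
  norm_num at hic ⊢
  linarith

lemma leaf1 (k : ℝ) (hk0 : (0:ℝ) < k) (hlo : 1 < k) (hhi : k ≤ 1.5) (n : ℕ) :
    gg k + ∑ i ∈ Finset.range n, gg ((sylv (1-1/k) i : ℝ)) ≤ 2.6802 := by
  set α := (1 : ℝ) - 1/k with hαdef
  have hu23 : 2/3 ≤ 1/k := by rw [div_le_div_iff₀ (by norm_num) hk0]; linarith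
  have hu1 : 1/k < 1 := by rw [div_lt_one hk0]; linarith
  have hα0 : 0 < α := by rw [hαdef]; linarith
  have hα1 : α ≤ 1 := by rw [hαdef]; linarith
  have hs0 : (4:ℤ) ≤ sylv α 0 := by
    have h := sylv_lb 0 (rem_zero α) (m := 3) hα0 (by push_cast; norm_num; rw [hαdef]; linarith)
    omega
  have hL : Real.log ((cseq 4 3 : ℝ)) ≤ 10.39721 := by
    rw [cseq_cast 4 3 24493 (by decide)]; push_cast; exact logle_24493
  have hic := innerChain0 hα0 hα1 4 (by norm_num) hs0 3 10.39721 (by decide) hL (by norm_num) n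
  rw [Finset.sum_range_succ, Finset.sum_range_succ, Finset.sum_range_succ, Finset.sum_range_zero] at hic
  rw [cseq_cast 4 0 4 (by decide), cseq_cast 4 1 13 (by decide), cseq_cast 4 2 157 (by decide), cseq_cast 4 3 24493 (by decide)] at hic
  push_cast at hic
  have hgk : gg k ≤ 1.3862943616 := by
    have h1 : Real.log (1+k^2) ≤ Real.log 4 := Real.log_le_log (by positivity) (by nlinarith)
    have h2 : Real.log 4 = 2*Real.log 2 := by
      rw [show (4:ℝ) = 2^2 by norm_num, Real.log_pow]; norm_num
    have h3 := Real.log_two_lt_d9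
    calc gg k ≤ Real.log (1+k^2) := by
          unfold gg
          apply div_le_self (Real.log_nonneg (by nlinarith)) (by linarith)
      _ ≤ 1.3862943616 := by rw [h2] at h1; linarith

  have := gg4le; have := gg13le; have := gg157le
  norm_num at hic ⊢
  linarith

lemma leaf2 (k : ℝ) (hk0 : (0:ℝ) < k) (hlo : 1.5 < k) (hhi : k ≤ 2) (n : ℕ) :
    gg k + ∑ i ∈ Finset.range n, gg ((sylv (1-1/k) i : ℝ)) ≤ 2.6802 := by
  set α := (1 : ℝ) - 1/k with hαdef
  have hu12 : 1/2 ≤ 1/k := by rw [div_le_div_iff₀ (by norm_num) hk0]; linarith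
  have hu1 : 1/k < 1 := by rw [div_lt_one hk0]; linarith
  have hα0 : 0 < α := by rw [hαdef]; linarith
  have hα1 : α ≤ 1 := by rw [hαdef]; linarith
  have hs0 : (3:ℤ) ≤ sylv α 0 := by
    have h := sylv_lb 0 (rem_zero α) (m := 2) hα0 (by push_cast; norm_num; rw [hαdef]; linarith)
    omega
  have hL : Real.log ((cseq 3 3 : ℝ)) ≤ 7.62462 := by
    rw [cseq_cast 3 3 1807 (by decide)]; push_cast; exact logle_1807
  have hic := innerChain0 hα0 hα1 3 (by norm_num) hs0 3 7.62462 (by decide) hL (by norm_num) n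
  rw [Finset.sum_range_succ, Finset.sum_range_succ, Finset.sum_range_succ, Finset.sum_range_zero] at hic
  rw [cseq_cast 3 0 3 (by decide), cseq_cast 3 1 7 (by decide), cseq_cast 3 2 43 (by decide), cseq_cast 3 3 1807 (by decide)] at hic
  push_cast at hic
  have hgk : gg k ≤ 1.60990/1.5 := by
    have h1 : Real.log (1+k^2) ≤ 1.60990 :=
      le_trans (Real.log_le_log (by positivity) (by nlinarith : (1+k^2) ≤ 5)) logle_5
    unfold gg
    apply div_le_div₀ (by norm_num) h1 (by norm_num) (by linarith)

  have := gg3le; have := gg7le; have := gg43le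
  norm_num at hic ⊢
  linarith

lemma LaBound (k : ℝ) (hk : 1 < k) (n : ℕ) :
    ∑ j ∈ Finset.range n, gg (aSeq k j) ≤ 2.6802 := by
  have hk0 : (0:ℝ) < k := by linarith
  have hα0 : (0:ℝ) < 1 - 1/k := by
    have : 1/k < 1 := by rw [div_lt_one hk0]; exact hk
    linarith
  have hα1 : (1:ℝ) - 1/k ≤ 1 := by
    have : 0 < 1/k := by positivity
    linarith
  have hknn : ∀ j, 1 ≤ aSeq k j := by
    intro j
    cases j with
    | zero => exact le_of_lt hk
    | succ j =>
      have := sylv_real_ge_two hα0 hα1 j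
      show (1:ℝ) ≤ ((sylv (1-1/k) j : ℝ))
      linarith
  have peel1 : ∑ j ∈ Finset.range n, gg (aSeq k j) ≤
      gg k + ∑ i ∈ Finset.range n, gg ((sylv (1-1/k) i : ℝ)) := by
    have h := sum_peel (fun j => gg (aSeq k j)) (fun j => gg_nonneg (hknn j)) n
    simpa [aSeq] using h
  refine le_trans peel1 ?_
  rcases le_or_gt k 1.5 with hc | hc
  · exact leaf1 k hk0 hk hc n
  rcases le_or_gt k 2 with hc2 | hc2
  · exact leaf2 k hk0 hc hc2 n
  rcases le_or_gt k 3 with hc3 | hc3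
  · exact leaf3 k hk0 hc2 hc3 n
  rcases le_or_gt k 4 with hc4 | hc4
  · exact leaf4 k hk0 hc3 hc4 n
  rcases le_or_gt k 5 with hc5 | hc5
  · exact leaf5 k hk0 hc4 hc5 n
  rcases le_or_gt k 6 with hc6 | hc6
  · exact leaf6 k hk0 hc5 hc6 n
  rcases le_or_gt k 8 with hc8 | hc8
  · exact leaf7 k hk0 hc6 hc8 n
  rcases le_or_gt k 12 with hc12 | hc12
  · exact leaf8 k hk0 hc8 hc12 n
  rcases le_or_gt k 24 with hc24 | hc24
  · exact leaf9 k hk0 hc12 hc24 n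
  rcases le_or_gt k 42 with hc42 | hc42
  · exact leaf10 k hk0 hc24 hc42 n
  · exact leaf11 k hk0 hc42 n

lemma part2 (k : ℝ) (hk : 1 < k) : k^2 * (6 + Real.log (20*k^3)) ≤ 10*k^3 := by
  have hk0 : (0:ℝ) < k := by linarith
  have hlog20 : Real.log 20 ≤ 3 := by
    rw [show (3:ℝ) = Real.log (Real.exp 3) by rw [Real.log_exp]]
    apply Real.log_le_log (by norm_num)
    have h3 : Real.exp 3 = Real.exp 1 ^ 3 := by rw [← Real.exp_nat_mul]; norm_num
    have he := Real.exp_one_gt_d9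
    have hcube : (2.7182818283:ℝ)^3 ≤ Real.exp 1 ^ 3 :=
      pow_le_pow_left₀ (by norm_num) (le_of_lt he) 3
    have : (20:ℝ) ≤ (2.7182818283:ℝ)^3 := by norm_num
    rw [h3]; linarith
  have hlogk : Real.log k ≤ k - 1 := Real.log_le_sub_one_of_pos hk0
  have hsplit : Real.log (20*k^3) = Real.log 20 + 3*Real.log k := by
    rw [Real.log_mul (by norm_num) (by positivity), Real.log_pow]; norm_num
  have h6 : 6 + Real.log (20*k^3) ≤ 10*k := by rw [hsplit]; nlinarith
  calc k^2 * (6 + Real.log (20*k^3)) ≤ k^2 * (10*k) := by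
        apply mul_le_mul_of_nonneg_left h6 (by positivity)
    _ = 10*k^3 := by ring

lemma key (k : ℝ) (hk : 1 < k) (N : ℕ) :
    ∑ j ∈ Finset.range N, ∑ ℓ ∈ Finset.range N,
      (k^2 / (aSeq k j * (sylv 1 ℓ : ℝ))) *
        (Real.log (20*k^3*(aSeq k j)^2 + 20*k^3*((sylv 1 ℓ : ℝ))^2) + 1)
      ≤ k^2 * (6 + Real.log (20*k^3)) := by
  have hk0 : (0:ℝ) < k := lt_trans one_pos hk
  have h1k1 : 1/k < 1 := by rw [div_lt_one hk0]; exact hk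
  have h1k0 : (0:ℝ) < 1/k := by positivity
  have hα0 : (0:ℝ) < 1 - 1/k := by linarith
  have hα1 : (1:ℝ) - 1/k ≤ 1 := by linarith
  have hA1 : ∀ j, 1 ≤ aSeq k j := by
    intro j
    cases j with
    | zero => exact le_of_lt hk
    | succ j =>
      have := sylv_real_ge_two hα0 hα1 j
      show (1:ℝ) ≤ ((sylv (1-1/k) j : ℝ))
      linarith
  have hB2 : ∀ ℓ : ℕ, (2:ℝ) ≤ ((sylv 1 ℓ : ℝ)) := fun ℓ => sylv_real_ge_two one_pos le_rfl ℓ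
  have hk3 : (1:ℝ) ≤ k^3 := one_le_pow₀ (le_of_lt hk)
  have hX0 : 0 ≤ Real.log (20*k^3) := Real.log_nonneg (by nlinarith [hk3])
  set X := Real.log (20*k^3) + 1 with hXdef
  have hX1 : 0 ≤ X := by rw [hXdef]; linarith
  have hPb : ∑ ℓ ∈ Finset.range N, 1/((sylv 1 ℓ : ℝ)) ≤ 1 := sum_sylv_le one_pos le_rfl N
  have hPa : ∑ j ∈ Finset.range N, 1/(aSeq k j) ≤ 1 := by
    have h := sum_peel (fun j => 1/(aSeq k j)) (fun j => by
      have := hA1 j; positivity) N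
    have h2 := sum_sylv_le hα0 hα1 N
    have h3 : ∑ j ∈ Finset.range N, 1/(aSeq k j) ≤
        1/k + ∑ i ∈ Finset.range N, 1/((sylv (1-1/k) i : ℝ)) := by simpa [aSeq] using h
    linarith
  have hWb := LbBound N
  have hWa := LaBound k hk N
  have hPa0 : 0 ≤ ∑ j ∈ Finset.range N, 1/(aSeq k j) :=
    Finset.sum_nonneg (fun j _ => by have := hA1 j; positivity)
  have inner : ∀ j ∈ Finset.range N,
      ∑ ℓ ∈ Finset.range N, (k^2 / (aSeq k j * (sylv 1 ℓ : ℝ))) *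
        (Real.log (20*k^3*(aSeq k j)^2 + 20*k^3*((sylv 1 ℓ : ℝ))^2) + 1) ≤
      k^2 * (1/(aSeq k j)) * ((X + Real.log (1+(aSeq k j)^2)) + 2.3198) := by
    intro j _
    have hAj := hA1 j
    have hApos : (0:ℝ) < aSeq k j := by linarith
    have hu0 : 0 ≤ Real.log (1+(aSeq k j)^2) := Real.log_nonneg (by nlinarith)
    have step1 : ∀ ℓ ∈ Finset.range N,
        (k^2 / (aSeq k j * (sylv 1 ℓ : ℝ))) *
          (Real.log (20*k^3*(aSeq k j)^2 + 20*k^3*((sylv 1 ℓ : ℝ))^2) + 1) ≤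
        k^2 * (1/(aSeq k j)) * ((X + Real.log (1+(aSeq k j)^2)) * (1/((sylv 1 ℓ : ℝ))) +
          gg ((sylv 1 ℓ : ℝ))) := by
      intro ℓ _
      have hB := hB2 ℓ
      have hBpos : (0:ℝ) < ((sylv 1 ℓ : ℝ)) := by linarith
      have hprod : 20*k^3*(aSeq k j)^2 + 20*k^3*((sylv 1 ℓ : ℝ))^2 =
          (20*k^3)*((aSeq k j)^2+((sylv 1 ℓ : ℝ))^2) := by ring
      have hlog1 : Real.log ((20*k^3)*((aSeq k j)^2+((sylv 1 ℓ : ℝ))^2)) =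
          Real.log (20*k^3) + Real.log ((aSeq k j)^2+((sylv 1 ℓ : ℝ))^2) :=
        Real.log_mul (by positivity) (by positivity)
      have hle : (aSeq k j)^2+((sylv 1 ℓ : ℝ))^2 ≤ (1+(aSeq k j)^2)*(1+((sylv 1 ℓ : ℝ))^2) := by
        nlinarith
      have hlog2 : Real.log ((aSeq k j)^2+((sylv 1 ℓ : ℝ))^2) ≤
          Real.log (1+(aSeq k j)^2) + Real.log (1+((sylv 1 ℓ : ℝ))^2) := by
        calc Real.log ((aSeq k j)^2+((sylv 1 ℓ : ℝ))^2)
            ≤ Real.log ((1+(aSeq k j)^2)*(1+((sylv 1 ℓ : ℝ))^2)) :=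
              Real.log_le_log (by positivity) hle
          _ = _ := Real.log_mul (by positivity) (by positivity)
      have hmain : Real.log (20*k^3*(aSeq k j)^2 + 20*k^3*((sylv 1 ℓ : ℝ))^2) + 1 ≤
          X + Real.log (1+(aSeq k j)^2) + Real.log (1+((sylv 1 ℓ : ℝ))^2) := by
        rw [hprod, hlog1, hXdef]; linarith
      have h1 : (k^2 / (aSeq k j * (sylv 1 ℓ : ℝ))) *
          (Real.log (20*k^3*(aSeq k j)^2 + 20*k^3*((sylv 1 ℓ : ℝ))^2) + 1) ≤
          (k^2 / (aSeq k j * (sylv 1 ℓ : ℝ))) *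
          (X + Real.log (1+(aSeq k j)^2) + Real.log (1+((sylv 1 ℓ : ℝ))^2)) :=
        mul_le_mul_of_nonneg_left hmain (by positivity)
      have h2 : (k^2 / (aSeq k j * (sylv 1 ℓ : ℝ))) *
          (X + Real.log (1+(aSeq k j)^2) + Real.log (1+((sylv 1 ℓ : ℝ))^2)) =
          k^2 * (1/(aSeq k j)) * ((X + Real.log (1+(aSeq k j)^2)) * (1/((sylv 1 ℓ : ℝ))) +
            Real.log (1+((sylv 1 ℓ : ℝ))^2)/((sylv 1 ℓ : ℝ))) := by
        field_simp
        try ring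
      have h3 : gg ((sylv 1 ℓ : ℝ)) = Real.log (1+((sylv 1 ℓ : ℝ))^2)/((sylv 1 ℓ : ℝ)) := rfl
      rw [h3]
      linarith
    have hsum0 : (0:ℝ) ≤ ∑ ℓ ∈ Finset.range N, 1/((sylv 1 ℓ : ℝ)) :=
      Finset.sum_nonneg (fun ℓ _ => by have := hB2 ℓ; positivity)
    calc ∑ ℓ ∈ Finset.range N, (k^2 / (aSeq k j * (sylv 1 ℓ : ℝ))) *
          (Real.log (20*k^3*(aSeq k j)^2 + 20*k^3*((sylv 1 ℓ : ℝ))^2) + 1)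
        ≤ ∑ ℓ ∈ Finset.range N, k^2 * (1/(aSeq k j)) *
            ((X + Real.log (1+(aSeq k j)^2)) * (1/((sylv 1 ℓ : ℝ))) + gg ((sylv 1 ℓ : ℝ))) :=
          Finset.sum_le_sum step1
      _ = k^2 * (1/(aSeq k j)) * ((X + Real.log (1+(aSeq k j)^2)) *
            (∑ ℓ ∈ Finset.range N, 1/((sylv 1 ℓ : ℝ))) +
            ∑ ℓ ∈ Finset.range N, gg ((sylv 1 ℓ : ℝ))) := by
          rw [← Finset.mul_sum, Finset.sum_add_distrib, ← Finset.mul_sum]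
      _ ≤ k^2 * (1/(aSeq k j)) * ((X + Real.log (1+(aSeq k j)^2)) * 1 + 2.3198) := by
          apply mul_le_mul_of_nonneg_left _ (by positivity)
          apply add_le_add _ hWb
          apply mul_le_mul_of_nonneg_left hPb (by linarith)
      _ = k^2 * (1/(aSeq k j)) * ((X + Real.log (1+(aSeq k j)^2)) + 2.3198) := by ring
  calc ∑ j ∈ Finset.range N, ∑ ℓ ∈ Finset.range N,
        (k^2 / (aSeq k j * (sylv 1 ℓ : ℝ))) *
          (Real.log (20*k^3*(aSeq k j)^2 + 20*k^3*((sylv 1 ℓ : ℝ))^2) + 1)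
      ≤ ∑ j ∈ Finset.range N, k^2 * (1/(aSeq k j)) *
          ((X + Real.log (1+(aSeq k j)^2)) + 2.3198) := Finset.sum_le_sum inner
    _ = ∑ j ∈ Finset.range N, (k^2 * (X + 2.3198) * (1/(aSeq k j)) + k^2 * gg (aSeq k j)) := by
        apply Finset.sum_congr rfl
        intro j _
        unfold gg
        ring
    _ = k^2 * (X + 2.3198) * (∑ j ∈ Finset.range N, 1/(aSeq k j)) +
          k^2 * ∑ j ∈ Finset.range N, gg (aSeq k j) := by
        rw [Finset.sum_add_distrib, ← Finset.mul_sum, ← Finset.mul_sum]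
    _ ≤ k^2 * (X + 2.3198) * 1 + k^2 * 2.6802 := by
        apply add_le_add
        · apply mul_le_mul_of_nonneg_left hPa (by positivity)
        · apply mul_le_mul_of_nonneg_left hWa (by positivity)
    _ = k^2 * (6 + Real.log (20*k^3)) := by rw [hXdef]; ring

theorem double_sum_bound (k : ℝ) (hk : 1 < k) :
    ∑' jl : ℕ × ℕ,
        (k^2 / (aSeq k jl.1 * (sylv 1 jl.2 : ℝ))) *
          (Real.log (20 * k^3 * (aSeq k jl.1)^2 + 20 * k^3 * ((sylv 1 jl.2 : ℝ))^2) + 1)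
      ≤ k^2 * (6 + Real.log (20 * k^3)) ∧
    k^2 * (6 + Real.log (20 * k^3)) ≤ 10 * k^3 := by
  have hk0 : (0:ℝ) < k := lt_trans one_pos hk
  have h1k1 : 1/k < 1 := by rw [div_lt_one hk0]; exact hk
  have h1k0 : (0:ℝ) < 1/k := by positivity
  have hα0 : (0:ℝ) < 1 - 1/k := by linarith
  have hα1 : (1:ℝ) - 1/k ≤ 1 := by linarith
  have hA1 : ∀ j, 1 ≤ aSeq k j := by
    intro j
    cases j with
    | zero => exact le_of_lt hk
    | succ j =>
      have := sylv_real_ge_two hα0 hα1 j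
      show (1:ℝ) ≤ ((sylv (1-1/k) j : ℝ))
      linarith
  have hB2 : ∀ ℓ : ℕ, (2:ℝ) ≤ ((sylv 1 ℓ : ℝ)) := fun ℓ => sylv_real_ge_two one_pos le_rfl ℓ
  have hf0 : ∀ p : ℕ × ℕ, 0 ≤ (k^2 / (aSeq k p.1 * (sylv 1 p.2 : ℝ))) *
      (Real.log (20 * k^3 * (aSeq k p.1)^2 + 20 * k^3 * ((sylv 1 p.2 : ℝ))^2) + 1) := by
    intro p
    have h1 := hA1 p.1
    have h2 := hB2 p.2
    apply mul_nonneg (by positivity)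
    have hk3 : (1:ℝ) ≤ k^3 := one_le_pow₀ (le_of_lt hk)
    have e1 : (1:ℝ) ≤ (aSeq k p.1)^2 := one_le_pow₀ h1
    have e2 : (0:ℝ) ≤ ((sylv 1 p.2 : ℝ))^2 := sq_nonneg _
    have harg : (1:ℝ) ≤ 20 * k^3 * (aSeq k p.1)^2 + 20 * k^3 * ((sylv 1 p.2 : ℝ))^2 := by
      nlinarith [hk3, e1, e2]
    have := Real.log_nonneg harg
    linarith
  have hC0 : 0 ≤ k^2 * (6 + Real.log (20 * k^3)) := by
    have hk3 : (1:ℝ) ≤ k^3 := one_le_pow₀ (le_of_lt hk)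
    have := Real.log_nonneg (by nlinarith [hk3] : (1:ℝ) ≤ 20*k^3)
    have h6 : (0:ℝ) ≤ 6 + Real.log (20*k^3) := by linarith
    positivity
  constructor
  · by_cases hsum : Summable (fun jl : ℕ × ℕ =>
      (k^2 / (aSeq k jl.1 * (sylv 1 jl.2 : ℝ))) *
        (Real.log (20 * k^3 * (aSeq k jl.1)^2 + 20 * k^3 * ((sylv 1 jl.2 : ℝ))^2) + 1))
    · apply Summable.tsum_le_of_sum_le hsum
      intro s
      set N := (s.sup fun p => max p.1 p.2) + 1 with hN
      have hsub : s ⊆ Finset.range N ×ˢ Finset.range N := by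
        intro p hp
        have h1 : max p.1 p.2 ≤ s.sup (fun q => max q.1 q.2) :=
          Finset.le_sup (f := fun q : ℕ × ℕ => max q.1 q.2) hp
        simp only [Finset.mem_product, Finset.mem_range, hN]
        omega
      calc ∑ p ∈ s, (k^2 / (aSeq k p.1 * (sylv 1 p.2 : ℝ))) *
            (Real.log (20 * k^3 * (aSeq k p.1)^2 + 20 * k^3 * ((sylv 1 p.2 : ℝ))^2) + 1)
          ≤ ∑ p ∈ Finset.range N ×ˢ Finset.range N,
              (k^2 / (aSeq k p.1 * (sylv 1 p.2 : ℝ))) *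
              (Real.log (20 * k^3 * (aSeq k p.1)^2 + 20 * k^3 * ((sylv 1 p.2 : ℝ))^2) + 1) :=
            Finset.sum_le_sum_of_subset_of_nonneg hsub (fun p _ _ => hf0 p)
        _ = ∑ j ∈ Finset.range N, ∑ ℓ ∈ Finset.range N,
              (k^2 / (aSeq k j * (sylv 1 ℓ : ℝ))) *
              (Real.log (20*k^3*(aSeq k j)^2 + 20*k^3*((sylv 1 ℓ : ℝ))^2) + 1) := by
            rw [Finset.sum_product]
        _ ≤ k^2 * (6 + Real.log (20 * k^3)) := key k hk N
    · rw [tsum_eq_zero_of_not_summable hsum]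
      exact hC0
  · exact part2 k hk
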